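/- arXiv:2504.02706 — 4 statements merged into one kernel-verified Lean document; each statement's English description precedes it below -/
import Mathlib

section
/- For any real β, ω, Hermitian H, and matrix A, the operator Fourier transform with Gaussian width σ satisfies the imaginary-time conjugation identity e^{βH} Â_H(ω) e^{-βH} = e^{βω + σ²β²} · Â_H(ω + 2σ²β). -/
open scoped Matrix.Norms.L2Operator

open Matrix Complex Real MeasureTheory


open scoped Matrix.Norms.L2Operator

open Matrix Complex Real MeasureTheory

/-- The Bohr-frequency component `A_ν = Σ_{E₂-E₁=ν} P_{E₂} A P_{E₁}` of a matrix `A`. -/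
noncomputable def bohrComponent {m : ℕ} (Evs : Finset ℝ) (P : ℝ → Matrix (Fin m) (Fin m) ℂ)
    (A : Matrix (Fin m) (Fin m) ℂ) (ν : ℝ) : Matrix (Fin m) (Fin m) ℂ :=
  ∑ p ∈ (Evs ×ˢ Evs).filter (fun p => p.2 - p.1 = ν), P p.2 * A * P p.1

/-- The set of Bohr frequencies `B(H) = Spec(H) - Spec(H)`. -/
noncomputable def bohrSet (Evs : Finset ℝ) : Finset ℝ :=
  (Evs ×ˢ Evs).image (fun p => p.2 - p.1)

/-- The Gaussian Fourier weight `f̂(ω) = (σ√(2π))^{-1/2} exp(-ω²/(4σ²))`. -/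
noncomputable def gaussWeightHat (σ ω : ℝ) : ℝ :=
  (Real.sqrt (σ * Real.sqrt (2 * π)))⁻¹ * Real.exp (-(ω ^ 2) / (4 * σ ^ 2))

/-- The operator Fourier transform `Â_H(ω) = Σ_{ν∈B(H)} A_ν f̂(ω-ν)`. -/
noncomputable def oft {m : ℕ} (Evs : Finset ℝ) (P : ℝ → Matrix (Fin m) (Fin m) ℂ)
    (σ : ℝ) (A : Matrix (Fin m) (Fin m) ℂ) (ω : ℝ) : Matrix (Fin m) (Fin m) ℂ :=
  ∑ ν ∈ bohrSet Evs, ((gaussWeightHat σ (ω - ν) : ℂ)) • bohrComponent Evs P A ν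

section Aux

variable {m : ℕ} {Evs : Finset ℝ} {P : ℝ → Matrix (Fin m) (Fin m) ℂ}
  {H : Matrix (Fin m) (Fin m) ℂ}

lemma aux_mul_proj (hH : H = ∑ E ∈ Evs, (E : ℂ) • P E)
    (hproj : ∀ E ∈ Evs, P E * P E = P E)
    (horth : ∀ E ∈ Evs, ∀ E' ∈ Evs, E ≠ E' → P E * P E' = 0)
    {E : ℝ} (hE : E ∈ Evs) : H * P E = (E : ℂ) • P E := by
  subst hH
  rw [Finset.sum_mul, Finset.sum_eq_single E]
  · rw [smul_mul_assoc, hproj E hE]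
  · intro F hF hne
    rw [smul_mul_assoc, horth F hF E hE hne, smul_zero]
  · intro h; exact (h hE).elim

lemma aux_proj_mul (hH : H = ∑ E ∈ Evs, (E : ℂ) • P E)
    (hproj : ∀ E ∈ Evs, P E * P E = P E)
    (horth : ∀ E ∈ Evs, ∀ E' ∈ Evs, E ≠ E' → P E * P E' = 0)
    {E : ℝ} (hE : E ∈ Evs) : P E * H = (E : ℂ) • P E := by
  subst hH
  rw [Finset.mul_sum, Finset.sum_eq_single E]
  · rw [mul_smul_comm, hproj E hE]
  · intro F hF hne
    rw [mul_smul_comm, horth E hE F hF hne.symm, smul_zero]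
  · intro h; exact (h hE).elim

lemma aux_pow_mul_proj (hH : H = ∑ E ∈ Evs, (E : ℂ) • P E)
    (hproj : ∀ E ∈ Evs, P E * P E = P E)
    (horth : ∀ E ∈ Evs, ∀ E' ∈ Evs, E ≠ E' → P E * P E' = 0)
    {E : ℝ} (hE : E ∈ Evs) (c : ℂ) :
    ∀ n : ℕ, ((c • H) ^ n) * P E = (c * E) ^ n • P E
  | 0 => by simp
  | n + 1 => by
    rw [pow_succ, mul_assoc, smul_mul_assoc, aux_mul_proj hH hproj horth hE,
      smul_smul, mul_smul_comm, aux_pow_mul_proj hH hproj horth hE c n, smul_smul,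
      pow_succ, mul_comm ((c * E) ^ n)]

lemma aux_proj_mul_pow (hH : H = ∑ E ∈ Evs, (E : ℂ) • P E)
    (hproj : ∀ E ∈ Evs, P E * P E = P E)
    (horth : ∀ E ∈ Evs, ∀ E' ∈ Evs, E ≠ E' → P E * P E' = 0)
    {E : ℝ} (hE : E ∈ Evs) (c : ℂ) :
    ∀ n : ℕ, P E * ((c • H) ^ n) = (c * E) ^ n • P E
  | 0 => by simp
  | n + 1 => by
    rw [pow_succ', ← mul_assoc, mul_smul_comm, aux_proj_mul hH hproj horth hE,
      smul_smul, smul_mul_assoc, aux_proj_mul_pow hH hproj horth hE c n, smul_smul,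
      pow_succ, mul_comm ((c * E) ^ n)]

lemma aux_scalar_tsum (z : ℂ) : Complex.exp z = ∑' n : ℕ, ((n.factorial : ℂ))⁻¹ * z ^ n := by
  rw [Complex.exp_eq_exp_ℂ, NormedSpace.exp_eq_tsum (𝕂 := ℂ)]
  simp [smul_eq_mul]

lemma aux_scalar_summable (z : ℂ) : Summable fun n : ℕ => ((n.factorial : ℂ))⁻¹ * z ^ n := by
  simpa [smul_eq_mul] using NormedSpace.expSeries_summable' (𝕂 := ℂ) z

lemma aux_exp_mul_proj (hH : H = ∑ E ∈ Evs, (E : ℂ) • P E)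
    (hproj : ∀ E ∈ Evs, P E * P E = P E)
    (horth : ∀ E ∈ Evs, ∀ E' ∈ Evs, E ≠ E' → P E * P E' = 0)
    {E : ℝ} (hE : E ∈ Evs) (c : ℂ) :
    NormedSpace.exp (c • H) * P E = Complex.exp (c * E) • P E := by
  rw [NormedSpace.exp_eq_tsum (𝕂 := ℂ),
    ← (NormedSpace.expSeries_summable' (𝕂 := ℂ) (c • H)).tsum_mul_right]
  have h1 : ∀ n : ℕ, (((n.factorial : ℂ))⁻¹ • (c • H) ^ n) * P E
      = (((n.factorial : ℂ))⁻¹ * (c * E) ^ n) • P E := fun n => by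
    rw [smul_mul_assoc, aux_pow_mul_proj hH hproj horth hE c n, smul_smul]
  simp_rw [h1]
  rw [(aux_scalar_summable (c * E)).tsum_smul_const, ← aux_scalar_tsum]

lemma aux_proj_mul_exp (hH : H = ∑ E ∈ Evs, (E : ℂ) • P E)
    (hproj : ∀ E ∈ Evs, P E * P E = P E)
    (horth : ∀ E ∈ Evs, ∀ E' ∈ Evs, E ≠ E' → P E * P E' = 0)
    {E : ℝ} (hE : E ∈ Evs) (c : ℂ) :
    P E * NormedSpace.exp (c • H) = Complex.exp (c * E) • P E := by
  rw [NormedSpace.exp_eq_tsum (𝕂 := ℂ),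
    ← (NormedSpace.expSeries_summable' (𝕂 := ℂ) (c • H)).tsum_mul_left]
  have h1 : ∀ n : ℕ, P E * (((n.factorial : ℂ))⁻¹ • (c • H) ^ n)
      = (((n.factorial : ℂ))⁻¹ * (c * E) ^ n) • P E := fun n => by
    rw [mul_smul_comm, aux_proj_mul_pow hH hproj horth hE c n, smul_smul]
  simp_rw [h1]
  rw [(aux_scalar_summable (c * E)).tsum_smul_const, ← aux_scalar_tsum]

lemma aux_gauss (σ : ℝ) (hσ : 0 < σ) (β ω ν : ℝ) :
    gaussWeightHat σ (ω - ν) * Real.exp (β * ν)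
      = Real.exp (β * ω + σ ^ 2 * β ^ 2) * gaussWeightHat σ (ω + 2 * σ ^ 2 * β - ν) := by
  unfold gaussWeightHat
  rw [mul_assoc, ← Real.exp_add, mul_left_comm, ← Real.exp_add]
  congr 1
  have hσ' : σ ≠ 0 := ne_of_gt hσ
  field_simp
  ring

end Aux

/-- **Imaginary-time conjugation of the operator Fourier transform:**
`e^{βH} Â_H(ω) e^{-βH} = e^{βω + σ²β²} Â_H(ω + 2σ²β)`, where `Â_H` is the operator
Fourier transform with Gaussian width `σ` of `A` with respect to `H = Σ_E E P_E`. -/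
theorem exp_conj_oft {m : ℕ} (Evs : Finset ℝ)
    (P : ℝ → Matrix (Fin m) (Fin m) ℂ) (H A : Matrix (Fin m) (Fin m) ℂ)
    (hH : H = ∑ E ∈ Evs, (E : ℂ) • P E)
    (hsum : ∑ E ∈ Evs, P E = 1)
    (hproj : ∀ E ∈ Evs, P E * P E = P E)
    (hherm : ∀ E ∈ Evs, (P E)ᴴ = P E)
    (horth : ∀ E ∈ Evs, ∀ E' ∈ Evs, E ≠ E' → P E * P E' = 0)
    (σ : ℝ) (hσ : 0 < σ) (β ω : ℝ) :
    NormedSpace.exp ((β : ℂ) • H) * oft Evs P σ A ω * NormedSpace.exp ((-(β : ℂ)) • H) =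
      ((Real.exp (β * ω + σ ^ 2 * β ^ 2) : ℂ)) • oft Evs P σ A (ω + 2 * σ ^ 2 * β) := by
  unfold oft
  rw [Finset.mul_sum, Finset.sum_mul, Finset.smul_sum]
  refine Finset.sum_congr rfl fun ν hν => ?_
  -- conjugate the Bohr component
  have hconj : NormedSpace.exp ((β : ℂ) • H) * bohrComponent Evs P A ν *
      NormedSpace.exp ((-(β : ℂ)) • H)
      = ((Real.exp (β * ν) : ℂ)) • bohrComponent Evs P A ν := by
    unfold bohrComponent
    rw [Finset.mul_sum, Finset.sum_mul, Finset.smul_sum]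
    refine Finset.sum_congr rfl fun p hp => ?_
    rw [Finset.mem_filter, Finset.mem_product] at hp
    obtain ⟨⟨h1, h2⟩, h3⟩ := hp
    calc NormedSpace.exp ((β : ℂ) • H) * (P p.2 * A * P p.1) *
          NormedSpace.exp ((-(β : ℂ)) • H)
        = (NormedSpace.exp ((β : ℂ) • H) * P p.2) * A *
          (P p.1 * NormedSpace.exp ((-(β : ℂ)) • H)) := by
            simp only [mul_assoc]
      _ = (Complex.exp ((β : ℂ) * p.2) • P p.2) * A *
          (Complex.exp ((-(β : ℂ)) * p.1) • P p.1) := by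
          rw [aux_exp_mul_proj hH hproj horth h2, aux_proj_mul_exp hH hproj horth h1]
      _ = (Complex.exp ((β : ℂ) * p.2) * Complex.exp ((-(β : ℂ)) * p.1)) •
          (P p.2 * A * P p.1) := by
          rw [smul_mul_assoc, smul_mul_assoc, mul_smul_comm, smul_smul]
      _ = ((Real.exp (β * ν) : ℂ)) • (P p.2 * A * P p.1) := by
          rw [← Complex.exp_add]
          congr 1
          rw [← h3, Complex.ofReal_exp]
          congr 1
          push_cast
          ring
  rw [mul_smul_comm, smul_mul_assoc, hconj, smul_smul, smul_smul]
  congr 1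
  exact_mod_cast aux_gauss σ hσ β ω ν
end

section
/- Let H = Σ_{γ∈Γ} h_γ be a Hamiltonian with each ‖h_γ‖ ≤ 1 and interaction degree at most d, and let A be a single-site operator with ‖A‖ ≤ 1. Then for any real β with |β| < 1/(2d), the imaginary-time conjugation converges with bound ‖e^{βH} A e^{-βH}‖ ≤ 1/(1 - 2d|β|). -/
open scoped Matrix.Norms.L2Operator

open Matrix

/-- A matrix on the qubits indexed by `V` is supported on the set `S` if its entries
vanish unless the configurations agree off `S`, and only depend on the restriction to `S`
(i.e. `A = A_S ⊗ I_{S^c}`). -/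
def SupportedOn {V : Type*} [DecidableEq V] (S : Finset V)
    (A : Matrix (V → Fin 2) (V → Fin 2) ℂ) : Prop :=
  (∀ x y : V → Fin 2, (∃ v ∉ S, x v ≠ y v) → A x y = 0) ∧
  (∀ x y x' y' : V → Fin 2, (∀ v ∈ S, x v = x' v) → (∀ v ∈ S, y v = y' v) →
    (∀ v ∉ S, x v = y v) → (∀ v ∉ S, x' v = y' v) → A x y = A x' y')

section SupportLemmas

variable {V : Type*} [Fintype V] [DecidableEq V]

lemma SupportedOn.sub' {S : Finset V} {X Y : Matrix (V → Fin 2) (V → Fin 2) ℂ}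
    (hX : SupportedOn S X) (hY : SupportedOn S Y) : SupportedOn S (X - Y) := by
  constructor
  · intro x y hxy
    simp [Matrix.sub_apply, hX.1 x y hxy, hY.1 x y hxy]
  · intro x y x' y' h1 h2 h3 h4
    simp [Matrix.sub_apply, hX.2 x y x' y' h1 h2 h3 h4, hY.2 x y x' y' h1 h2 h3 h4]

lemma SupportedOn.mono {S S' : Finset V} (hSS : S ⊆ S') {X : Matrix (V → Fin 2) (V → Fin 2) ℂ}
    (hX : SupportedOn S X) : SupportedOn S' X := by
  constructor
  · rintro x y ⟨v, hv, hne⟩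
    exact hX.1 x y ⟨v, fun hvS => hv (hSS hvS), hne⟩
  · intro x y x' y' h1 h2 h3 h4
    by_cases hxy : ∀ v ∉ S, x v = y v
    · have hxy' : ∀ v ∉ S, x' v = y' v := by
        intro v hv
        by_cases hv' : v ∈ S'
        · rw [← h1 v hv', ← h2 v hv']; exact hxy v hv
        · exact h4 v hv'
      exact hX.2 x y x' y' (fun v hv => h1 v (hSS hv)) (fun v hv => h2 v (hSS hv)) hxy hxy'
    · push_neg at hxy
      obtain ⟨v, hv, hne⟩ := hxy
      have hv' : v ∈ S' := by
        by_contra hns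
        exact hne (h3 v hns)
      rw [hX.1 x y ⟨v, hv, hne⟩,
        hX.1 x' y' ⟨v, hv, by rw [← h1 v hv', ← h2 v hv']; exact hne⟩]

lemma SupportedOn.mul' {S T : Finset V} {X Y : Matrix (V → Fin 2) (V → Fin 2) ℂ}
    (hX : SupportedOn S X) (hY : SupportedOn T Y) : SupportedOn (S ∪ T) (X * Y) := by
  constructor
  · rintro x y ⟨v, hv, hne⟩
    rw [Matrix.mul_apply]
    apply Finset.sum_eq_zero
    intro z _
    by_cases hz : z v = x v
    · have h0 : Y z y = 0 :=
        hY.1 z y ⟨v, fun hvT => hv (Finset.mem_union_right S hvT), by rw [hz]; exact hne⟩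
      simp [h0]
    · have h0 : X x z = 0 :=
        hX.1 x z ⟨v, fun hvS => hv (Finset.mem_union_left T hvS), fun hc => hz hc.symm⟩
      simp [h0]
  · intro x y x' y' h1 h2 h3 h4
    rw [Matrix.mul_apply, Matrix.mul_apply]
    have collapse : ∀ (x y : V → Fin 2),
        ∑ z : V → Fin 2, X x z * Y z y =
          ∑ z ∈ Finset.univ.filter
            (fun z => (∀ v ∉ S, z v = x v) ∧ (∀ v ∉ T, z v = y v)), X x z * Y z y := by
      intro x y
      refine (Finset.sum_filter_of_ne ?_).symm.trans rfl
      intro z _ hz0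
      constructor
      · intro v hv
        by_contra hne
        exact hz0 (by have := hX.1 x z ⟨v, hv, fun hc => hne hc.symm⟩; simp [this])
      · intro v hv
        by_contra hne
        exact hz0 (by have := hY.1 z y ⟨v, hv, hne⟩; simp [this])
    rw [collapse x y, collapse x' y']
    refine Finset.sum_nbij'
      (fun z => fun v => if v ∈ S ∪ T then z v else x' v)
      (fun w => fun v => if v ∈ S ∪ T then w v else x v) ?_ ?_ ?_ ?_ ?_
    · intro z hz
      simp only [Finset.mem_filter, Finset.mem_univ, true_and] at hz ⊢
      obtain ⟨hzx, hzy⟩ := hz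
      refine ⟨fun v hv => ?_, fun v hv => ?_⟩
      · by_cases hvu : v ∈ S ∪ T
        · have hvT : v ∈ T := (Finset.mem_union.mp hvu).resolve_left hv
          simp only [if_pos hvu]
          rw [hzx v hv, h1 v hvu]
        · simp [hvu]
      · by_cases hvu : v ∈ S ∪ T
        · have hvS : v ∈ S := (Finset.mem_union.mp hvu).resolve_right hv
          simp only [if_pos hvu]
          rw [hzy v hv, h2 v hvu]
        · simp only [if_neg hvu]
          exact h4 v hvu
    · intro w hw
      simp only [Finset.mem_filter, Finset.mem_univ, true_and] at hw ⊢
      obtain ⟨hwx, hwy⟩ := hw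
      refine ⟨fun v hv => ?_, fun v hv => ?_⟩
      · by_cases hvu : v ∈ S ∪ T
        · have hvT : v ∈ T := (Finset.mem_union.mp hvu).resolve_left hv
          simp only [if_pos hvu]
          rw [hwx v hv, ← h1 v hvu]
        · simp [hvu]
      · by_cases hvu : v ∈ S ∪ T
        · have hvS : v ∈ S := (Finset.mem_union.mp hvu).resolve_right hv
          simp only [if_pos hvu]
          rw [hwy v hv, ← h2 v hvu]
        · simp only [if_neg hvu]
          exact h3 v hvu
    · intro z hz
      simp only [Finset.mem_filter, Finset.mem_univ, true_and] at hz
      funext v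
      by_cases hvu : v ∈ S ∪ T
      · simp [hvu]
      · simp only [if_neg hvu]
        exact (hz.1 v (fun hvS => hvu (Finset.mem_union_left T hvS))).symm
    · intro w hw
      simp only [Finset.mem_filter, Finset.mem_univ, true_and] at hw
      funext v
      by_cases hvu : v ∈ S ∪ T
      · simp [hvu]
      · simp only [if_neg hvu]
        exact (hw.1 v (fun hvS => hvu (Finset.mem_union_left T hvS))).symm
    · intro z hz
      simp only [Finset.mem_filter, Finset.mem_univ, true_and] at hz
      obtain ⟨hzx, hzy⟩ := hz
      have e1 : X x z = X x' (fun v => if v ∈ S ∪ T then z v else x' v) := by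
        refine hX.2 x z x' _ ?_ ?_ ?_ ?_
        · intro v hv; exact h1 v (Finset.mem_union_left T hv)
        · intro v hv; simp [Finset.mem_union_left T hv]
        · intro v hv; exact (hzx v hv).symm
        · intro v hv
          by_cases hvu : v ∈ S ∪ T
          · have hvT : v ∈ T := (Finset.mem_union.mp hvu).resolve_left hv
            simp only [if_pos hvu]
            rw [hzx v hv, h1 v hvu]
          · simp [hvu]
      have e2 : Y z y = Y (fun v => if v ∈ S ∪ T then z v else x' v) y' := by
        refine hY.2 z y _ y' ?_ ?_ ?_ ?_
        · intro v hv; simp [Finset.mem_union_right S hv]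
        · intro v hv; exact h2 v (Finset.mem_union_right S hv)
        · intro v hv; exact hzy v hv
        · intro v hv
          by_cases hvu : v ∈ S ∪ T
          · have hvS : v ∈ S := (Finset.mem_union.mp hvu).resolve_right hv
            simp only [if_pos hvu]
            rw [hzy v hv, h2 v hvu]
          · simp only [if_neg hvu]
            exact h4 v hvu
      rw [e1, e2]

lemma commute_of_disjoint_support {S T : Finset V} {X Y : Matrix (V → Fin 2) (V → Fin 2) ℂ}
    (hX : SupportedOn S X) (hY : SupportedOn T Y) (hST : Disjoint S T) : X * Y = Y * X := by
  ext x y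
  rw [Matrix.mul_apply, Matrix.mul_apply]
  have hz₀ : ∑ z : V → Fin 2, X x z * Y z y
      = X x (fun v => if v ∈ S then y v else x v) * Y (fun v => if v ∈ S then y v else x v) y := by
    refine Finset.sum_eq_single _ ?_ (by simp)
    intro z _ hzz
    have : ∃ v, z v ≠ (fun v => if v ∈ S then y v else x v) v := by
      by_contra hc
      push_neg at hc
      exact hzz (funext hc)
    obtain ⟨v, hv⟩ := this
    by_cases hvS : v ∈ S
    · have hvT : v ∉ T := Finset.disjoint_left.mp hST hvS
      simp only [if_pos hvS] at hv
      rw [hY.1 z y ⟨v, hvT, hv⟩, mul_zero]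
    · simp only [if_neg hvS] at hv
      rw [hX.1 x z ⟨v, hvS, fun hc => hv hc.symm⟩, zero_mul]
  have hw₀ : ∑ z : V → Fin 2, Y x z * X z y
      = Y x (fun v => if v ∈ T then y v else x v) * X (fun v => if v ∈ T then y v else x v) y := by
    refine Finset.sum_eq_single _ ?_ (by simp)
    intro z _ hzz
    have : ∃ v, z v ≠ (fun v => if v ∈ T then y v else x v) v := by
      by_contra hc
      push_neg at hc
      exact hzz (funext hc)
    obtain ⟨v, hv⟩ := this
    by_cases hvT : v ∈ T
    · have hvS : v ∉ S := Finset.disjoint_right.mp hST hvT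
      simp only [if_pos hvT] at hv
      rw [hX.1 z y ⟨v, hvS, hv⟩, mul_zero]
    · simp only [if_neg hvT] at hv
      rw [hY.1 x z ⟨v, hvT, fun hc => hv hc.symm⟩, zero_mul]
  rw [hz₀, hw₀]
  set z₀ : V → Fin 2 := fun v => if v ∈ S then y v else x v with hz₀def
  set w₀ : V → Fin 2 := fun v => if v ∈ T then y v else x v with hw₀def
  by_cases hcase : ∀ v, v ∉ S → v ∉ T → x v = y v
  · have e1 : X x z₀ = X w₀ y := by
      refine hX.2 x z₀ w₀ y ?_ ?_ ?_ ?_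
      · intro v hv
        have hvT : v ∉ T := Finset.disjoint_left.mp hST hv
        simp [hw₀def, hvT]
      · intro v hv; simp [hz₀def, hv]
      · intro v hv; simp [hz₀def, hv]
      · intro v hv
        by_cases hvT : v ∈ T
        · simp [hw₀def, hvT]
        · simp [hw₀def, hvT, hcase v hv hvT]
    have e2 : Y z₀ y = Y x w₀ := by
      refine hY.2 z₀ y x w₀ ?_ ?_ ?_ ?_
      · intro v hv
        have hvS : v ∉ S := Finset.disjoint_right.mp hST hv
        simp [hz₀def, hvS]
      · intro v hv; simp [hw₀def, hv]
      · intro v hv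
        by_cases hvS : v ∈ S
        · simp [hz₀def, hvS]
        · simp [hz₀def, hvS, hcase v hvS hv]
      · intro v hv; simp [hw₀def, hv]
    rw [e1, e2, mul_comm]
  · push_neg at hcase
    obtain ⟨v, hvS, hvT, hne⟩ := hcase
    have e1 : Y z₀ y = 0 := by
      refine hY.1 z₀ y ⟨v, hvT, ?_⟩
      simp [hz₀def, hvS, hne]
    have e2 : X w₀ y = 0 := by
      refine hX.1 w₀ y ⟨v, hvS, ?_⟩
      simp [hw₀def, hvT, hne]
    rw [e1, e2, mul_zero, mul_zero]

end SupportLemmas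

section ExpConj

variable {𝔸 : Type*} [NormedRing 𝔸] [NormedAlgebra ℂ 𝔸] [CompleteSpace 𝔸]

lemma ad_pow_norm_le (B A : 𝔸) (k : ℕ) :
    ‖((LinearMap.mulLeft ℂ B - LinearMap.mulRight ℂ B) ^ k) A‖ ≤ (2 * ‖B‖) ^ k * ‖A‖ := by
  induction k with
  | zero => simp
  | succ k ih =>
    set D := LinearMap.mulLeft ℂ B - LinearMap.mulRight ℂ B with hD
    have hstep : ∀ X : 𝔸, ‖D X‖ ≤ 2 * ‖B‖ * ‖X‖ := by
      intro X
      have : D X = B * X - X * B := by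
        simp [hD, LinearMap.sub_apply, LinearMap.mulLeft_apply, LinearMap.mulRight_apply]
      rw [this]
      calc ‖B * X - X * B‖ ≤ ‖B * X‖ + ‖X * B‖ := norm_sub_le _ _
        _ ≤ ‖B‖ * ‖X‖ + ‖X‖ * ‖B‖ := add_le_add (norm_mul_le _ _) (norm_mul_le _ _)
        _ = 2 * ‖B‖ * ‖X‖ := by ring
    have : (D ^ (k + 1)) A = D ((D ^ k) A) := by
      rw [pow_succ']; rfl
    rw [this]
    calc ‖D ((D ^ k) A)‖ ≤ 2 * ‖B‖ * ‖(D ^ k) A‖ := hstep _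
      _ ≤ 2 * ‖B‖ * ((2 * ‖B‖) ^ k * ‖A‖) := by
          apply mul_le_mul_of_nonneg_left ih (by positivity)
      _ = (2 * ‖B‖) ^ (k + 1) * ‖A‖ := by ring

lemma ad_summable (B A : 𝔸) :
    Summable (fun k : ℕ =>
      ‖((k.factorial : ℂ))⁻¹ • (((LinearMap.mulLeft ℂ B - LinearMap.mulRight ℂ B) ^ k) A)‖) := by
  refine Summable.of_nonneg_of_le (fun k => norm_nonneg _) (fun k => ?_)
    ((Real.summable_pow_div_factorial (2 * ‖B‖)).mul_right ‖A‖)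
  rw [norm_smul]
  have h1 : ‖((k.factorial : ℂ))⁻¹‖ = ((k.factorial : ℝ))⁻¹ := by
    rw [norm_inv]
    simp
  rw [h1]
  calc ((k.factorial : ℝ))⁻¹ * ‖((LinearMap.mulLeft ℂ B - LinearMap.mulRight ℂ B) ^ k) A‖
      ≤ ((k.factorial : ℝ))⁻¹ * ((2 * ‖B‖) ^ k * ‖A‖) := by
        apply mul_le_mul_of_nonneg_left (ad_pow_norm_le B A k)
        positivity
    _ = (2 * ‖B‖) ^ k / k.factorial * ‖A‖ := by
        field_simp

lemma exp_conj_eq_tsum (B A : 𝔸) :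
    NormedSpace.exp B * A * NormedSpace.exp (-B)
      = ∑' k : ℕ, ((k.factorial : ℂ))⁻¹ •
          (((LinearMap.mulLeft ℂ B - LinearMap.mulRight ℂ B) ^ k) A) := by
  set D := LinearMap.mulLeft ℂ B - LinearMap.mulRight ℂ B with hDdef
  set R := LinearMap.mulRight ℂ B with hRdef
  have hDR : Commute D R := (LinearMap.commute_mulLeft_right B B).sub_left (Commute.refl R)
  -- the binomial expansion of `B ^ m * A`
  have key : ∀ m : ℕ, ((m.factorial : ℂ))⁻¹ • B ^ m * A
      = ∑ p ∈ Finset.HasAntidiagonal.antidiagonal m,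
          (((p.1.factorial : ℂ))⁻¹ • (D ^ p.1) A) * (((p.2.factorial : ℂ))⁻¹ • B ^ p.2) := by
    intro m
    have hBm : B ^ m * A = (LinearMap.mulLeft ℂ B ^ m) A := by
      rw [LinearMap.pow_mulLeft]; rfl
    have hL : LinearMap.mulLeft ℂ B = D + R := by rw [hDdef, sub_add_cancel]
    have expand : B ^ m * A
        = ∑ p ∈ Finset.HasAntidiagonal.antidiagonal m, m.choose p.1 • ((D ^ p.1) A * B ^ p.2) := by
      rw [hBm, hL, hDR.add_pow', LinearMap.sum_apply]
      refine Finset.sum_congr rfl fun p hp => ?_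
      rw [LinearMap.smul_apply]
      congr 1
      rw [(hDR.pow_pow p.1 p.2).eq, Module.End.mul_apply, hRdef, LinearMap.pow_mulRight,
        LinearMap.mulRight_apply]
    rw [smul_mul_assoc, expand, Finset.smul_sum]
    refine Finset.sum_congr rfl fun p hp => ?_
    have hpm : p.1 + p.2 = m := Finset.HasAntidiagonal.mem_antidiagonal.mp hp
    have hjm : p.1 ≤ m := hpm ▸ Nat.le_add_right _ _
    rw [smul_mul_smul_comm, ← Nat.cast_smul_eq_nsmul ℂ, smul_smul]
    congr 1
    have hfact : ((m.choose p.1 : ℂ)) * (p.1.factorial : ℂ) * ((m - p.1).factorial : ℂ)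
        = (m.factorial : ℂ) := by
      exact_mod_cast congrArg (Nat.cast (R := ℂ)) (Nat.choose_mul_factorial_mul_factorial hjm)
    have hp2 : p.2 = m - p.1 := by omega
    rw [hp2]
    have hj0 : (p.1.factorial : ℂ) ≠ 0 := Nat.cast_ne_zero.mpr p.1.factorial_ne_zero
    have hmj0 : ((m - p.1).factorial : ℂ) ≠ 0 := Nat.cast_ne_zero.mpr (m - p.1).factorial_ne_zero
    have hm0 : ((m.factorial : ℂ)) ≠ 0 := Nat.cast_ne_zero.mpr m.factorial_ne_zero
    field_simp
    linear_combination hfact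
  have h1 : NormedSpace.exp B * A
      = (∑' k : ℕ, ((k.factorial : ℂ))⁻¹ • (D ^ k) A) * NormedSpace.exp B := by
    rw [NormedSpace.exp_eq_tsum ℂ]
    rw [← Summable.tsum_mul_right A (NormedSpace.expSeries_summable' (𝕂 := ℂ) B)]
    rw [tsum_mul_tsum_eq_tsum_sum_antidiagonal_of_summable_norm (ad_summable B A)
      (NormedSpace.norm_expSeries_summable' (𝕂 := ℂ) B)]
    exact tsum_congr key
  have h2 : NormedSpace.exp B * NormedSpace.exp (-B) = 1 := by
    rw [← NormedSpace.exp_add_of_commute_of_mem_ball (𝕂 := ℂ) (Commute.neg_right (Commute.refl B))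
      ((NormedSpace.expSeries_radius_eq_top ℂ 𝔸).symm ▸ edist_lt_top _ _)
      ((NormedSpace.expSeries_radius_eq_top ℂ 𝔸).symm ▸ edist_lt_top _ _), add_neg_cancel,
      NormedSpace.exp_zero]
  calc NormedSpace.exp B * A * NormedSpace.exp (-B)
      = (∑' k : ℕ, ((k.factorial : ℂ))⁻¹ • (D ^ k) A)
          * (NormedSpace.exp B * NormedSpace.exp (-B)) := by
        rw [← mul_assoc, ← h1]
    _ = ∑' k : ℕ, ((k.factorial : ℂ))⁻¹ • (D ^ k) A := by rw [h2, mul_one]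

end ExpConj

/-- **Convergence of imaginary-time conjugation at high temperature:**
for a Hamiltonian `H = Σ_γ h_γ` with terms of norm at most `1` and interaction degree at
most `d`, a single-site operator `A` with `‖A‖ ≤ 1`, and `|β| < 1/(2d)`,
`‖e^{βH} A e^{-βH}‖ ≤ 1/(1 - 2d|β|)`. -/
theorem norm_exp_conj_le_of_small_beta
    {V Γ : Type} [Fintype V] [DecidableEq V] [Fintype Γ]
    (supp : Γ → Finset V) (h : Γ → Matrix (V → Fin 2) (V → Fin 2) ℂ)
    (d : ℕ)
    (hsupp : ∀ γ, SupportedOn (supp γ) (h γ))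
    (hnorm : ∀ γ, ‖h γ‖ ≤ 1)
    (hdeg : ∀ γ, (Finset.univ.filter (fun γ' => (supp γ ∩ supp γ').Nonempty)).card ≤ d)
    (i : V) (A : Matrix (V → Fin 2) (V → Fin 2) ℂ)
    (hA : SupportedOn {i} A) (hAnorm : ‖A‖ ≤ 1)
    (β : ℝ) (hβ : |β| < 1 / (2 * d)) :
    ‖NormedSpace.exp ((β : ℂ) • ∑ γ, h γ) * A *
        NormedSpace.exp ((-(β : ℂ)) • ∑ γ, h γ)‖ ≤ 1 / (1 - 2 * d * |β|) := by
  classical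
  rcases Nat.eq_zero_or_pos d with hd0 | hd0
  · exfalso
    rw [hd0] at hβ
    norm_num at hβ
    exact absurd hβ (abs_nonneg β).not_gt
  have hd1 : (1 : ℝ) ≤ d := by exact_mod_cast hd0
  set H : Matrix (V → Fin 2) (V → Fin 2) ℂ := ∑ γ, h γ with hHdef
  set D : Matrix (V → Fin 2) (V → Fin 2) ℂ →ₗ[ℂ] Matrix (V → Fin 2) (V → Fin 2) ℂ :=
    LinearMap.mulLeft ℂ H - LinearMap.mulRight ℂ H with hDdef
  -- the key combinatorial estimate on iterated commutators
  have key : ∀ (k n : ℕ) (S : Finset V) (X : Matrix (V → Fin 2) (V → Fin 2) ℂ),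
      SupportedOn S X →
      (Finset.univ.filter (fun γ => (supp γ ∩ S).Nonempty)).card ≤ n →
      ‖(D ^ k) X‖ ≤ (∏ j ∈ Finset.range k, ((n : ℝ) + (j : ℝ) * (d : ℝ))) * 2 ^ k * ‖X‖ := by
    intro k
    induction k with
    | zero => intro n S X _ _; simp
    | succ k ih =>
      intro n S X hX hn
      set T := Finset.univ.filter (fun γ => (supp γ ∩ S).Nonempty) with hT
      have hDX : D X = ∑ γ ∈ T, (h γ * X - X * h γ) := by
        have h0 : D X = ∑ γ : Γ, (h γ * X - X * h γ) := by
          have e : D X = H * X - X * H := by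
            simp [hDdef, LinearMap.sub_apply, LinearMap.mulLeft_apply, LinearMap.mulRight_apply]
          rw [e, hHdef, Finset.sum_mul, Finset.mul_sum, ← Finset.sum_sub_distrib]
        rw [h0]
        refine (Finset.sum_filter_of_ne ?_).symm
        intro γ _ hne
        by_contra hc
        apply hne
        have hdisj : Disjoint (supp γ) S := by
          rw [Finset.disjoint_iff_inter_eq_empty]
          exact Finset.not_nonempty_iff_eq_empty.mp hc
        rw [commute_of_disjoint_support (hsupp γ) hX hdisj, sub_self]
      have step : (D ^ (k + 1)) X = ∑ γ ∈ T, (D ^ k) (h γ * X - X * h γ) := by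
        rw [pow_succ, Module.End.mul_apply, hDX, map_sum]
      have hprodnn : (0:ℝ) ≤ ∏ j ∈ Finset.range k, (((n + d : ℕ) : ℝ) + (j : ℝ) * (d : ℝ)) := by
        apply Finset.prod_nonneg
        intro j _
        positivity
      have hterm : ∀ γ ∈ T, ‖(D ^ k) (h γ * X - X * h γ)‖ ≤
          (∏ j ∈ Finset.range k, (((n + d : ℕ) : ℝ) + (j : ℝ) * (d : ℝ))) * 2 ^ k
            * (2 * ‖X‖) := by
        intro γ hγ
        have hXγ : SupportedOn (supp γ ∪ S) (h γ * X - X * h γ) := by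
          refine SupportedOn.sub' ((hsupp γ).mul' hX) ?_
          exact (hX.mul' (hsupp γ)).mono (by rw [Finset.union_comm])
        have hcard : (Finset.univ.filter
            (fun γ' => (supp γ' ∩ (supp γ ∪ S)).Nonempty)).card ≤ n + d := by
          have hsub : Finset.univ.filter (fun γ' => (supp γ' ∩ (supp γ ∪ S)).Nonempty)
              ⊆ (Finset.univ.filter (fun γ' => (supp γ' ∩ S).Nonempty))
                ∪ (Finset.univ.filter (fun γ' => (supp γ' ∩ supp γ).Nonempty)) := by
            intro γ' hγ'
            simp only [Finset.mem_filter, Finset.mem_univ, true_and, Finset.mem_union] at hγ' ⊢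
            obtain ⟨v, hv⟩ := hγ'
            rcases Finset.mem_inter.mp hv with ⟨h1, h2⟩
            rcases Finset.mem_union.mp h2 with h3 | h3
            · exact Or.inr ⟨v, Finset.mem_inter.mpr ⟨h1, h3⟩⟩
            · exact Or.inl ⟨v, Finset.mem_inter.mpr ⟨h1, h3⟩⟩
          refine le_trans (Finset.card_le_card hsub)
            (le_trans (Finset.card_union_le _ _) ?_)
          have hd' : (Finset.univ.filter
              (fun γ' => (supp γ' ∩ supp γ).Nonempty)).card ≤ d := by
            refine le_trans (le_of_eq ?_) (hdeg γ)
            congr 1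
            ext γ'
            simp only [Finset.mem_filter, Finset.mem_univ, true_and]
            rw [Finset.inter_comm]
          exact add_le_add hn hd'
        have h2X : ‖h γ * X - X * h γ‖ ≤ 2 * ‖X‖ := by
          have hX0 : (0:ℝ) ≤ ‖X‖ := norm_nonneg _
          have hh1 : ‖h γ * X‖ ≤ ‖X‖ := by
            calc ‖h γ * X‖ ≤ ‖h γ‖ * ‖X‖ := norm_mul_le _ _
              _ ≤ 1 * ‖X‖ := by apply mul_le_mul_of_nonneg_right (hnorm γ) hX0
              _ = ‖X‖ := one_mul _
          have hh2 : ‖X * h γ‖ ≤ ‖X‖ := by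
            calc ‖X * h γ‖ ≤ ‖X‖ * ‖h γ‖ := norm_mul_le _ _
              _ ≤ ‖X‖ * 1 := by apply mul_le_mul_of_nonneg_left (hnorm γ) hX0
              _ = ‖X‖ := mul_one _
          calc ‖h γ * X - X * h γ‖ ≤ ‖h γ * X‖ + ‖X * h γ‖ := norm_sub_le _ _
            _ ≤ 2 * ‖X‖ := by linarith
        calc ‖(D ^ k) (h γ * X - X * h γ)‖
            ≤ (∏ j ∈ Finset.range k, (((n + d : ℕ) : ℝ) + (j : ℝ) * (d : ℝ))) * 2 ^ k
              * ‖h γ * X - X * h γ‖ := ih (n + d) (supp γ ∪ S) _ hXγ hcard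
          _ ≤ (∏ j ∈ Finset.range k, (((n + d : ℕ) : ℝ) + (j : ℝ) * (d : ℝ))) * 2 ^ k
              * (2 * ‖X‖) := by
              apply mul_le_mul_of_nonneg_left h2X
              positivity
      rw [step]
      calc ‖∑ γ ∈ T, (D ^ k) (h γ * X - X * h γ)‖
          ≤ ∑ γ ∈ T, ‖(D ^ k) (h γ * X - X * h γ)‖ := norm_sum_le _ _
        _ ≤ T.card • ((∏ j ∈ Finset.range k, (((n + d : ℕ) : ℝ) + (j : ℝ) * (d : ℝ))) * 2 ^ k
              * (2 * ‖X‖)) := Finset.sum_le_card_nsmul _ _ _ hterm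
        _ ≤ (n : ℝ) * ((∏ j ∈ Finset.range k, (((n + d : ℕ) : ℝ) + (j : ℝ) * (d : ℝ))) * 2 ^ k
              * (2 * ‖X‖)) := by
            rw [nsmul_eq_mul]
            apply mul_le_mul_of_nonneg_right
            · exact_mod_cast hn
            · positivity
        _ = (∏ j ∈ Finset.range (k + 1), ((n : ℝ) + (j : ℝ) * (d : ℝ))) * 2 ^ (k + 1) * ‖X‖ := by
            rw [Finset.prod_range_succ']
            have hcongr : ∀ j ∈ Finset.range k,
                ((n : ℝ) + ((j + 1 : ℕ) : ℝ) * (d : ℝ))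
                  = (((n + d : ℕ) : ℝ) + (j : ℝ) * (d : ℝ)) := by
              intro j _
              push_cast
              ring
            rw [Finset.prod_congr rfl hcongr]
            push_cast
            ring
  -- base case for the support of `A`
  have hbase : (Finset.univ.filter (fun γ => (supp γ ∩ ({i} : Finset V)).Nonempty)).card
      ≤ d := by
    rcases Finset.eq_empty_or_nonempty
      (Finset.univ.filter (fun γ => (supp γ ∩ ({i} : Finset V)).Nonempty)) with he | hne
    · rw [he]; simp
    · obtain ⟨γ₀, hγ₀⟩ := hne
      have hi0 : i ∈ supp γ₀ := by
        obtain ⟨v, hv⟩ := (Finset.mem_filter.mp hγ₀).2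
        rcases Finset.mem_inter.mp hv with ⟨h1, h2⟩
        rwa [Finset.mem_singleton.mp h2] at h1
      refine le_trans (Finset.card_le_card ?_) (hdeg γ₀)
      intro γ hγ
      simp only [Finset.mem_filter, Finset.mem_univ, true_and] at hγ ⊢
      obtain ⟨v, hv⟩ := hγ
      rcases Finset.mem_inter.mp hv with ⟨h1, h2⟩
      have hiγ : i ∈ supp γ := by rwa [Finset.mem_singleton.mp h2] at h1
      exact ⟨i, Finset.mem_inter.mpr ⟨hi0, hiγ⟩⟩
  have hDk : ∀ k : ℕ, ‖(D ^ k) A‖ ≤ (k.factorial : ℝ) * (2 * d : ℝ) ^ k := by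
    intro k
    have hfct : ∏ j ∈ Finset.range k, ((d : ℝ) + (j : ℝ) * (d : ℝ))
        = (k.factorial : ℝ) * (d : ℝ) ^ k := by
      have e1 : ∀ j ∈ Finset.range k, ((d : ℝ) + (j : ℝ) * (d : ℝ))
          = ((j : ℝ) + 1) * (d : ℝ) := by intro j _; ring
      rw [Finset.prod_congr rfl e1, Finset.prod_mul_distrib, Finset.prod_const,
        Finset.card_range]
      congr 1
      rw [← Finset.prod_range_add_one_eq_factorial]
      push_cast
      rfl
    calc ‖(D ^ k) A‖ ≤ (∏ j ∈ Finset.range k, ((d : ℝ) + (j : ℝ) * (d : ℝ))) * 2 ^ k * ‖A‖ :=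
        key k d {i} A hA hbase
      _ ≤ (∏ j ∈ Finset.range k, ((d : ℝ) + (j : ℝ) * (d : ℝ))) * 2 ^ k * 1 := by
          apply mul_le_mul_of_nonneg_left hAnorm
          apply mul_nonneg _ (by positivity)
          apply Finset.prod_nonneg
          intro j _
          positivity
      _ = (k.factorial : ℝ) * (2 * d : ℝ) ^ k := by
          rw [hfct, mul_pow]
          ring
  -- rewrite using the general conjugation identity
  have hDβ : LinearMap.mulLeft ℂ ((β : ℂ) • H) - LinearMap.mulRight ℂ ((β : ℂ) • H)
      = (β : ℂ) • D := by
    ext X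
    simp [hDdef, LinearMap.sub_apply, LinearMap.mulLeft_apply, LinearMap.mulRight_apply,
      smul_mul_assoc, mul_smul_comm, smul_sub]
  have hneg : (-(β : ℂ)) • H = -((β : ℂ) • H) := by rw [neg_smul]
  rw [hneg, exp_conj_eq_tsum ((β : ℂ) • H) A]
  set r : ℝ := 2 * d * |β| with hrdef
  have hr0 : (0:ℝ) ≤ r := by positivity
  have hr1 : r < 1 := by
    have h2d : (0:ℝ) < 2 * d := by positivity
    rw [lt_div_iff₀ h2d] at hβ
    rw [hrdef]
    calc 2 * (d:ℝ) * |β| = |β| * (2 * d) := by ring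
      _ < 1 := hβ
  have hbound : ∀ k : ℕ,
      ‖((k.factorial : ℂ))⁻¹ •
        (((LinearMap.mulLeft ℂ ((β : ℂ) • H) - LinearMap.mulRight ℂ ((β : ℂ) • H)) ^ k) A)‖
        ≤ r ^ k := by
    intro k
    rw [hDβ, smul_pow, LinearMap.smul_apply, norm_smul, norm_smul]
    have e1 : ‖((k.factorial : ℂ))⁻¹‖ = ((k.factorial : ℝ))⁻¹ := by
      rw [norm_inv]; simp
    have e2 : ‖((β : ℂ)) ^ k‖ = |β| ^ k := by
      rw [norm_pow, Complex.norm_real, Real.norm_eq_abs]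
    rw [e1, e2]
    have hfac0 : (0:ℝ) < (k.factorial : ℝ) := by exact_mod_cast k.factorial_pos
    calc ((k.factorial : ℝ))⁻¹ * (|β| ^ k * ‖(D ^ k) A‖)
        ≤ ((k.factorial : ℝ))⁻¹ * (|β| ^ k * ((k.factorial : ℝ) * (2 * d : ℝ) ^ k)) := by
          apply mul_le_mul_of_nonneg_left _ (by positivity)
          apply mul_le_mul_of_nonneg_left (hDk k) (by positivity)
      _ = r ^ k := by
          rw [hrdef]
          field_simp
          ring
  calc ‖∑' k : ℕ, ((k.factorial : ℂ))⁻¹ •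
        (((LinearMap.mulLeft ℂ ((β : ℂ) • H) - LinearMap.mulRight ℂ ((β : ℂ) • H)) ^ k) A)‖
      ≤ (1 - r)⁻¹ := tsum_of_norm_bounded (hasSum_geometric_of_lt_one hr0 hr1) hbound
    _ = 1 / (1 - 2 * d * |β|) := by rw [one_div, hrdef]
end

section
/- For any matrix A and Hermitian matrices H₁, H₂ with double Bohr decomposition (A_{ν₁})_{ν₂}, it holds that e^{H₂}e^{-H₁} A e^{H₁} e^{-H₂} − e^{-H₂}e^{H₁} A e^{-H₁} e^{H₂} = Σ_{ν₁∈B₁, ν₂∈B₂} (A_{ν₁})_{ν₂} · 2 sinh(ν₂ − ν₁). -/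
open Matrix

lemma pow_spectral {m : ℕ} (Evs : Finset ℝ) (P : ℝ → Matrix (Fin m) (Fin m) ℂ)
    (f : ℝ → ℂ)
    (hproj : ∀ E ∈ Evs, P E * P E = P E)
    (horth : ∀ E ∈ Evs, ∀ E' ∈ Evs, E ≠ E' → P E * P E' = 0) (n : ℕ) :
    (∑ E ∈ Evs, f E • P E) ^ (n + 1) = ∑ E ∈ Evs, f E ^ (n + 1) • P E := by
  induction n with
  | zero => simp
  | succ n ih =>
    rw [pow_succ, ih, Finset.sum_mul_sum]
    refine Finset.sum_congr rfl fun E hE => ?_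
    rw [Finset.sum_eq_single E (fun E' hE' hne => ?_) (fun h => absurd hE h)]
    · rw [smul_mul_assoc, mul_smul_comm, hproj E hE, smul_smul, ← pow_succ]
    · rw [smul_mul_assoc, mul_smul_comm, horth E hE E' hE' (Ne.symm hne), smul_zero, smul_zero]

lemma exp_spectral {m : ℕ} (Evs : Finset ℝ) (P : ℝ → Matrix (Fin m) (Fin m) ℂ)
    (f : ℝ → ℂ)
    (hsum : ∑ E ∈ Evs, P E = 1)
    (hproj : ∀ E ∈ Evs, P E * P E = P E)
    (horth : ∀ E ∈ Evs, ∀ E' ∈ Evs, E ≠ E' → P E * P E' = 0) :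
    NormedSpace.exp (∑ E ∈ Evs, f E • P E) = ∑ E ∈ Evs, Complex.exp (f E) • P E := by
  rw [NormedSpace.exp_eq_tsum ℂ]
  beta_reduce
  have hterm : ∀ n : ℕ, ((n.factorial : ℂ))⁻¹ • (∑ E ∈ Evs, f E • P E) ^ n
      = ∑ E ∈ Evs, ((n.factorial : ℂ))⁻¹ • (f E ^ n • P E) := by
    intro n
    cases n with
    | zero => simp [hsum]
    | succ n => rw [pow_spectral Evs P f hproj horth, Finset.smul_sum]
  rw [tsum_congr hterm,
    Summable.tsum_finsetSum (fun E hE => by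
      simpa [smul_smul] using
        (NormedSpace.expSeries_summable' (𝕂 := ℂ) (f E)).smul_const (P E))]
  refine Finset.sum_congr rfl fun E hE => ?_
  have hs : Summable fun n : ℕ => ((n.factorial : ℂ))⁻¹ • f E ^ n :=
    NormedSpace.expSeries_summable' (𝕂 := ℂ) (f E)
  calc ∑' n : ℕ, ((n.factorial : ℂ))⁻¹ • (f E ^ n • P E)
      = ∑' n : ℕ, (((n.factorial : ℂ))⁻¹ • f E ^ n) • P E := by
        exact tsum_congr fun n => (smul_assoc _ _ _).symm
    _ = (∑' n : ℕ, ((n.factorial : ℂ))⁻¹ • f E ^ n) • P E := hs.tsum_smul_const (P E)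
    _ = Complex.exp (f E) • P E := by
        rw [Complex.exp_eq_exp_ℂ, NormedSpace.exp_eq_tsum ℂ]

lemma conj_sum {m : ℕ} (S : Finset ℝ) (P : ℝ → Matrix (Fin m) (Fin m) ℂ)
    (A : Matrix (Fin m) (Fin m) ℂ) (a b : ℝ → ℂ) :
    (∑ x ∈ S, a x • P x) * A * (∑ y ∈ S, b y • P y)
      = ∑ p ∈ S ×ˢ S, (a p.2 * b p.1) • (P p.2 * A * P p.1) := by
  rw [Finset.sum_product]
  simp only [Finset.sum_mul, Finset.mul_sum, smul_mul_assoc, mul_smul_comm, smul_smul,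
    Finset.smul_sum]
  exact Finset.sum_congr rfl fun x _ => Finset.sum_congr rfl fun y _ => by rw [mul_comm]

lemma double_conj {m : ℕ} (S₁ S₂ : Finset ℝ) (P₁ P₂ : ℝ → Matrix (Fin m) (Fin m) ℂ)
    (A : Matrix (Fin m) (Fin m) ℂ) (a b c d : ℝ → ℂ) :
    (∑ x ∈ S₂, c x • P₂ x) * ((∑ x ∈ S₁, a x • P₁ x) * A * (∑ y ∈ S₁, b y • P₁ y)) *
        (∑ y ∈ S₂, d y • P₂ y)
      = ∑ q ∈ S₂ ×ˢ S₂, ∑ p ∈ S₁ ×ˢ S₁,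
          (c q.2 * d q.1 * (a p.2 * b p.1)) •
            (P₂ q.2 * (P₁ p.2 * A * P₁ p.1) * P₂ q.1) := by
  rw [conj_sum S₁ P₁ A a b, conj_sum S₂ P₂ _ c d]
  refine Finset.sum_congr rfl fun q _ => ?_
  rw [Finset.mul_sum, Finset.sum_mul, Finset.smul_sum]
  refine Finset.sum_congr rfl fun p _ => ?_
  rw [mul_smul_comm, smul_mul_assoc, smul_smul]

lemma fiber_collapse {β : Type*} [AddCommMonoid β] (S : Finset ℝ) (F : ℝ → (ℝ × ℝ) → β) :
    ∑ ν ∈ (S ×ˢ S).image (fun p => p.2 - p.1),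
      ∑ q ∈ (S ×ˢ S).filter (fun q => q.2 - q.1 = ν), F ν q
      = ∑ q ∈ S ×ˢ S, F (q.2 - q.1) q := by
  calc ∑ ν ∈ (S ×ˢ S).image (fun p => p.2 - p.1),
        ∑ q ∈ (S ×ˢ S).filter (fun q => q.2 - q.1 = ν), F ν q
      = ∑ ν ∈ (S ×ˢ S).image (fun p => p.2 - p.1),
          ∑ q ∈ (S ×ˢ S).filter (fun q => q.2 - q.1 = ν), F (q.2 - q.1) q :=
        Finset.sum_congr rfl fun ν hν => Finset.sum_congr rfl fun q hq => by
          rw [← (Finset.mem_filter.mp hq).2]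
    _ = ∑ q ∈ S ×ˢ S, F (q.2 - q.1) q :=
        Finset.sum_fiberwise_of_maps_to (fun q hq => Finset.mem_image_of_mem _ hq) _

lemma rhs_collapse {m : ℕ} (S₁ S₂ : Finset ℝ) (P₁ P₂ : ℝ → Matrix (Fin m) (Fin m) ℂ)
    (A : Matrix (Fin m) (Fin m) ℂ) :
    (∑ ν₁ ∈ bohrSet S₁, ∑ ν₂ ∈ bohrSet S₂,
        ((2 * Real.sinh (ν₂ - ν₁) : ℝ) : ℂ) •
          bohrComponent S₂ P₂ (bohrComponent S₁ P₁ A ν₁) ν₂)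
      = ∑ q ∈ S₂ ×ˢ S₂, ∑ p ∈ S₁ ×ˢ S₁,
          ((2 * Real.sinh ((q.2 - q.1) - (p.2 - p.1)) : ℝ) : ℂ) •
            (P₂ q.2 * (P₁ p.2 * A * P₁ p.1) * P₂ q.1) := by
  unfold bohrSet bohrComponent
  calc ∑ ν₁ ∈ (S₁ ×ˢ S₁).image (fun p => p.2 - p.1),
        ∑ ν₂ ∈ (S₂ ×ˢ S₂).image (fun p => p.2 - p.1),
          ((2 * Real.sinh (ν₂ - ν₁) : ℝ) : ℂ) •
            ∑ q ∈ (S₂ ×ˢ S₂).filter (fun q => q.2 - q.1 = ν₂),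
              P₂ q.2 * (∑ p ∈ (S₁ ×ˢ S₁).filter (fun p => p.2 - p.1 = ν₁),
                P₁ p.2 * A * P₁ p.1) * P₂ q.1
      = ∑ ν₁ ∈ (S₁ ×ˢ S₁).image (fun p => p.2 - p.1),
          ∑ q ∈ S₂ ×ˢ S₂,
            ((2 * Real.sinh ((q.2 - q.1) - ν₁) : ℝ) : ℂ) •
              (P₂ q.2 * (∑ p ∈ (S₁ ×ˢ S₁).filter (fun p => p.2 - p.1 = ν₁),
                P₁ p.2 * A * P₁ p.1) * P₂ q.1) := by
        refine Finset.sum_congr rfl fun ν₁ _ => ?_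
        simp only [Finset.smul_sum]
        exact fiber_collapse S₂ (fun ν₂ q => ((2 * Real.sinh (ν₂ - ν₁) : ℝ) : ℂ) •
          (P₂ q.2 * (∑ p ∈ (S₁ ×ˢ S₁).filter (fun p => p.2 - p.1 = ν₁),
            P₁ p.2 * A * P₁ p.1) * P₂ q.1))
    _ = ∑ q ∈ S₂ ×ˢ S₂, ∑ ν₁ ∈ (S₁ ×ˢ S₁).image (fun p => p.2 - p.1),
          ∑ p ∈ (S₁ ×ˢ S₁).filter (fun p => p.2 - p.1 = ν₁),
            ((2 * Real.sinh ((q.2 - q.1) - ν₁) : ℝ) : ℂ) •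
              (P₂ q.2 * (P₁ p.2 * A * P₁ p.1) * P₂ q.1) := by
        rw [Finset.sum_comm]
        refine Finset.sum_congr rfl fun q _ => Finset.sum_congr rfl fun ν₁ _ => ?_
        rw [Finset.mul_sum, Finset.sum_mul, Finset.smul_sum]
    _ = ∑ q ∈ S₂ ×ˢ S₂, ∑ p ∈ S₁ ×ˢ S₁,
          ((2 * Real.sinh ((q.2 - q.1) - (p.2 - p.1)) : ℝ) : ℂ) •
            (P₂ q.2 * (P₁ p.2 * A * P₁ p.1) * P₂ q.1) := by
        refine Finset.sum_congr rfl fun q _ => ?_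
        exact fiber_collapse S₁ (fun ν₁ p => ((2 * Real.sinh ((q.2 - q.1) - ν₁) : ℝ) : ℂ) •
          (P₂ q.2 * (P₁ p.2 * A * P₁ p.1) * P₂ q.1))

lemma coeff_eq (w x y z : ℝ) :
    Complex.exp (w : ℂ) * Complex.exp (-(z : ℂ)) * (Complex.exp (-(y : ℂ)) * Complex.exp (x : ℂ))
      - Complex.exp (-(w : ℂ)) * Complex.exp (z : ℂ) *
          (Complex.exp (y : ℂ) * Complex.exp (-(x : ℂ)))
      = ((2 * Real.sinh ((w - z) - (y - x)) : ℝ) : ℂ) := by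
  rw [Real.sinh_eq]
  push_cast
  simp only [← Complex.exp_add]
  ring_nf

/-- **Double Bohr frequency decomposition (sinh form):** for Hermitian `H₁ = Σ E P¹_E`,
`H₂ = Σ E P²_E` and any matrix `A`,
`e^{H₂}e^{-H₁} A e^{H₁}e^{-H₂} − e^{-H₂}e^{H₁} A e^{-H₁}e^{H₂}
  = Σ_{ν₁∈B₁,ν₂∈B₂} 2 sinh(ν₂−ν₁) (A_{ν₁})_{ν₂}`. -/
theorem double_bohr_sinh {m : ℕ}
    (Evs₁ Evs₂ : Finset ℝ) (P₁ P₂ : ℝ → Matrix (Fin m) (Fin m) ℂ)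
    (H₁ H₂ A : Matrix (Fin m) (Fin m) ℂ)
    (hH₁ : H₁ = ∑ E ∈ Evs₁, (E : ℂ) • P₁ E)
    (hH₂ : H₂ = ∑ E ∈ Evs₂, (E : ℂ) • P₂ E)
    (hsum₁ : ∑ E ∈ Evs₁, P₁ E = 1) (hsum₂ : ∑ E ∈ Evs₂, P₂ E = 1)
    (hproj₁ : ∀ E ∈ Evs₁, P₁ E * P₁ E = P₁ E) (hproj₂ : ∀ E ∈ Evs₂, P₂ E * P₂ E = P₂ E)
    (hherm₁ : ∀ E ∈ Evs₁, (P₁ E)ᴴ = P₁ E) (hherm₂ : ∀ E ∈ Evs₂, (P₂ E)ᴴ = P₂ E)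
    (horth₁ : ∀ E ∈ Evs₁, ∀ E' ∈ Evs₁, E ≠ E' → P₁ E * P₁ E' = 0)
    (horth₂ : ∀ E ∈ Evs₂, ∀ E' ∈ Evs₂, E ≠ E' → P₂ E * P₂ E' = 0) :
    NormedSpace.exp H₂ * NormedSpace.exp (-H₁) * A *
        NormedSpace.exp H₁ * NormedSpace.exp (-H₂) -
      NormedSpace.exp (-H₂) * NormedSpace.exp H₁ * A *
        NormedSpace.exp (-H₁) * NormedSpace.exp H₂ =
      ∑ ν₁ ∈ bohrSet Evs₁, ∑ ν₂ ∈ bohrSet Evs₂,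
        ((2 * Real.sinh (ν₂ - ν₁) : ℝ) : ℂ) •
          bohrComponent Evs₂ P₂ (bohrComponent Evs₁ P₁ A ν₁) ν₂ := by
  have hexp₁ : NormedSpace.exp H₁ = ∑ E ∈ Evs₁, Complex.exp (E : ℂ) • P₁ E := by
    rw [hH₁]; exact exp_spectral _ _ (fun E => (E : ℂ)) hsum₁ hproj₁ horth₁
  have hneg₁ : -H₁ = ∑ E ∈ Evs₁, (-(E : ℂ)) • P₁ E := by
    rw [hH₁, ← Finset.sum_neg_distrib]
    exact Finset.sum_congr rfl fun E _ => (neg_smul _ _).symm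
  have hexp₁' : NormedSpace.exp (-H₁) = ∑ E ∈ Evs₁, Complex.exp (-(E : ℂ)) • P₁ E := by
    rw [hneg₁]; exact exp_spectral _ _ (fun E => -(E : ℂ)) hsum₁ hproj₁ horth₁
  have hexp₂ : NormedSpace.exp H₂ = ∑ E ∈ Evs₂, Complex.exp (E : ℂ) • P₂ E := by
    rw [hH₂]; exact exp_spectral _ _ (fun E => (E : ℂ)) hsum₂ hproj₂ horth₂
  have hneg₂ : -H₂ = ∑ E ∈ Evs₂, (-(E : ℂ)) • P₂ E := by
    rw [hH₂, ← Finset.sum_neg_distrib]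
    exact Finset.sum_congr rfl fun E _ => (neg_smul _ _).symm
  have hexp₂' : NormedSpace.exp (-H₂) = ∑ E ∈ Evs₂, Complex.exp (-(E : ℂ)) • P₂ E := by
    rw [hneg₂]; exact exp_spectral _ _ (fun E => -(E : ℂ)) hsum₂ hproj₂ horth₂
  have hassoc : ∀ U V W X Y : Matrix (Fin m) (Fin m) ℂ,
      U * V * W * X * Y = U * (V * W * X) * Y := fun U V W X Y => by
    rw [mul_assoc U V W, mul_assoc U (V * W) X]
  rw [rhs_collapse Evs₁ Evs₂ P₁ P₂ A, hexp₁, hexp₁', hexp₂, hexp₂',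
    hassoc, hassoc,
    double_conj Evs₁ Evs₂ P₁ P₂ A (fun E => Complex.exp (-(E : ℂ)))
      (fun E => Complex.exp (E : ℂ)) (fun E => Complex.exp (E : ℂ))
      (fun E => Complex.exp (-(E : ℂ))),
    double_conj Evs₁ Evs₂ P₁ P₂ A (fun E => Complex.exp (E : ℂ))
      (fun E => Complex.exp (-(E : ℂ))) (fun E => Complex.exp (-(E : ℂ)))
      (fun E => Complex.exp (E : ℂ)),
    ← Finset.sum_sub_distrib]
  refine Finset.sum_congr rfl fun q _ => ?_
  rw [← Finset.sum_sub_distrib]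
  refine Finset.sum_congr rfl fun p _ => ?_
  rw [← sub_smul, coeff_eq]
end

section
/- Let ρ be a positive definite density matrix on a bipartite system Λ = B ∪ B^c with |B| qubits in region B. Then Tr((Tr_B(ρ^{1/2}))²) ≥ 2^{-3|B|}. -/
open scoped ComplexOrder

open Matrix

/-- The partial trace over the first (region-`B`) tensor factor of a bipartite matrix. -/
noncomputable def partialTraceB {α γ : Type*} [Fintype α]
    (M : Matrix (α × γ) (α × γ) ℂ) : Matrix γ γ ℂ :=
  Matrix.of fun y y' => ∑ x : α, M (x, y) (x, y')

/-- The positive square root of a positive semidefinite matrix (as in the older Mathlib's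
`Matrix.PosSemidef.sqrt`, which has since been removed). -/
noncomputable def Matrix.PosSemidef.sqrt {n : Type*} [Fintype n] [DecidableEq n]
    {A : Matrix n n ℂ} (hA : A.PosSemidef) : Matrix n n ℂ :=
  hA.1.eigenvectorUnitary.1 * diagonal ((↑) ∘ (√·) ∘ hA.1.eigenvalues) *
  (star hA.1.eigenvectorUnitary : Matrix n n ℂ)

lemma Matrix.PosSemidef.posSemidef_sqrt {n : Type*} [Fintype n] [DecidableEq n]
    {A : Matrix n n ℂ} (hA : A.PosSemidef) : hA.sqrt.PosSemidef := by
  unfold Matrix.PosSemidef.sqrt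
  have h := (posSemidef_diagonal_iff (d := ((↑) ∘ (√·) ∘ hA.1.eigenvalues : n → ℂ))).mpr
    (fun i => by simpa using Complex.zero_le_real.mpr (Real.sqrt_nonneg (hA.1.eigenvalues i)))
  simpa [star_eq_conjTranspose] using h.mul_mul_conjTranspose_same hA.1.eigenvectorUnitary.1

lemma Matrix.PosSemidef.sqrt_mul_self {n : Type*} [Fintype n] [DecidableEq n]
    {A : Matrix n n ℂ} (hA : A.PosSemidef) : hA.sqrt * hA.sqrt = A := by
  unfold Matrix.PosSemidef.sqrt
  have hU : (star hA.1.eigenvectorUnitary : Matrix n n ℂ) * hA.1.eigenvectorUnitary.1 = 1 :=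
    Unitary.star_mul_self_of_mem hA.1.eigenvectorUnitary.2
  have hD : diagonal ((↑) ∘ (√·) ∘ hA.1.eigenvalues) * diagonal ((↑) ∘ (√·) ∘ hA.1.eigenvalues)
      = diagonal (RCLike.ofReal ∘ hA.1.eigenvalues : n → ℂ) := by
    rw [diagonal_mul_diagonal]
    congr 1
    funext i
    simp only [Function.comp_apply]
    rw [← Complex.ofReal_mul, Real.mul_self_sqrt (hA.eigenvalues_nonneg i)]
    rfl
  conv_rhs => rw [hA.1.spectral_theorem]
  rw [Unitary.conjStarAlgAut_apply, ← hD]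
  calc hA.1.eigenvectorUnitary.1 * diagonal ((↑) ∘ (√·) ∘ hA.1.eigenvalues)
        * (star hA.1.eigenvectorUnitary : Matrix n n ℂ)
        * (hA.1.eigenvectorUnitary.1 * diagonal ((↑) ∘ (√·) ∘ hA.1.eigenvalues)
        * (star hA.1.eigenvectorUnitary : Matrix n n ℂ))
      = hA.1.eigenvectorUnitary.1 * (diagonal ((↑) ∘ (√·) ∘ hA.1.eigenvalues)
        * ((star hA.1.eigenvectorUnitary : Matrix n n ℂ) * hA.1.eigenvectorUnitary.1)
        * diagonal ((↑) ∘ (√·) ∘ hA.1.eigenvalues))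
        * (star hA.1.eigenvectorUnitary : Matrix n n ℂ) := by simp only [Matrix.mul_assoc]
    _ = hA.1.eigenvectorUnitary.1 * (diagonal ((↑) ∘ (√·) ∘ hA.1.eigenvalues)
        * diagonal ((↑) ∘ (√·) ∘ hA.1.eigenvalues))
        * (star hA.1.eigenvectorUnitary : Matrix n n ℂ) := by
        rw [hU, Matrix.mul_one]

private lemma sum_mul_sum_swap {ι κ : Type*} [Fintype ι] [Fintype κ]
    (F G H K : ι → κ → ℂ) :
    ∑ q : κ × κ, (∑ w : ι, F w q.1 * G w q.2) * (∑ w' : ι, H w' q.1 * K w' q.2)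
      = ∑ p : ι × ι, (∑ y : κ, F p.1 y * H p.2 y) * (∑ y' : κ, G p.1 y' * K p.2 y') := by
  have h1 : ∀ q : κ × κ, (∑ w : ι, F w q.1 * G w q.2) * (∑ w' : ι, H w' q.1 * K w' q.2)
      = ∑ p : ι × ι, (F p.1 q.1 * G p.1 q.2) * (H p.2 q.1 * K p.2 q.2) := by
    intro q
    rw [Fintype.sum_mul_sum]
    exact (Fintype.sum_prod_type (f := fun p : ι × ι =>
      F p.1 q.1 * G p.1 q.2 * (H p.2 q.1 * K p.2 q.2))).symm
  have h2 : ∀ p : ι × ι, (∑ y : κ, F p.1 y * H p.2 y) * (∑ y' : κ, G p.1 y' * K p.2 y')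
      = ∑ q : κ × κ, (F p.1 q.1 * H p.2 q.1) * (G p.1 q.2 * K p.2 q.2) := by
    intro p
    rw [Fintype.sum_mul_sum]
    exact (Fintype.sum_prod_type (f := fun q : κ × κ =>
      F p.1 q.1 * H p.2 q.1 * (G p.1 q.2 * K p.2 q.2))).symm
  simp only [h1, h2]
  rw [Finset.sum_comm]
  exact Finset.sum_congr rfl fun p _ => Finset.sum_congr rfl fun q _ => by ring

private lemma reindex4 {δ ε : Type*} [Fintype δ] [Fintype ε] (f : (δ × ε) → (δ × ε) → ℂ) :
    ∑ u : δ × ε, ∑ v : δ × ε, f u v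
      = ∑ x : δ, ∑ x' : δ, ∑ q : ε × ε, f (x, q.1) (x', q.2) := by
  simp only [Fintype.sum_prod_type]
  exact Finset.sum_congr rfl fun x _ => Finset.sum_comm

/-- **Purity lower bound for the reduced square root:** for a positive definite density
matrix `ρ` on a bipartite system whose `B`-factor consists of `k` qubits
(dimension `2^k`), one has `Tr((Tr_B(ρ^{1/2}))²) ≥ 2^{-3k}`. -/
theorem trace_sq_partialTrace_sqrt_ge
    {α γ : Type} [Fintype α] [Fintype γ] [DecidableEq α] [DecidableEq γ]
    (k : ℕ) (hcard : Fintype.card α = 2 ^ k)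
    (ρ : Matrix (α × γ) (α × γ) ℂ) (hρ : ρ.PosDef) (htr : ρ.trace = 1) :
    ((2 : ℝ) ^ (3 * k))⁻¹ ≤
      ((partialTraceB hρ.posSemidef.sqrt * partialTraceB hρ.posSemidef.sqrt).trace).re := by
  classical
  have hPSD : (hρ.posSemidef.sqrt).PosSemidef := hρ.posSemidef.posSemidef_sqrt
  set σ : Matrix (α × γ) (α × γ) ℂ := hρ.posSemidef.sqrt with hσdef
  have hσσ : σ * σ = ρ := hρ.posSemidef.sqrt_mul_self
  have hσherm : ∀ u v : α × γ, (starRingEnd ℂ) (σ v u) = σ u v := fun u v => by rw [starRingEnd_apply]; exact hPSD.1.apply u v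
  set τ : Matrix (α × γ) (α × γ) ℂ := hPSD.sqrt with hτdef
  have hττ : τ * τ = σ := hPSD.sqrt_mul_self
  have hτPSD : τ.PosSemidef := hPSD.posSemidef_sqrt
  have hexp : ∀ u v, σ u v = ∑ w, (starRingEnd ℂ) (τ w u) * τ w v := by
    intro u v
    rw [← hττ, Matrix.mul_apply]
    exact Finset.sum_congr rfl fun w _ => by rw [← hτPSD.1.apply u w, starRingEnd_apply]
  set g : α → EuclideanSpace ℂ ((α × γ) × (α × γ)) :=
    fun x => WithLp.toLp 2 (fun p : (α × γ) × (α × γ) => ∑ y : γ, τ p.1 (x, y) * (starRingEnd ℂ) (τ p.2 (x, y))) with hgdef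
  -- Key 1 : the Frobenius pairing of off-diagonal blocks of σ is an inner product of the g's
  have key1 : ∀ x x' : α,
      ∑ q : γ × γ, σ (x, q.1) (x', q.2) * (starRingEnd ℂ) (σ (x, q.1) (x', q.2))
        = (inner ℂ (g x) (g x') : ℂ) := by
    intro x x'
    have e1 : ∀ q : γ × γ, σ (x, q.1) (x', q.2) * (starRingEnd ℂ) (σ (x, q.1) (x', q.2))
        = (∑ w, (starRingEnd ℂ) (τ w (x, q.1)) * τ w (x', q.2))
          * (∑ w', τ w' (x, q.1) * (starRingEnd ℂ) (τ w' (x', q.2))) := by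
      intro q
      rw [hexp (x, q.1) (x', q.2)]
      congr 1
      rw [map_sum]
      exact Finset.sum_congr rfl fun w _ => by simp [_root_.map_mul]
    rw [Finset.sum_congr rfl fun q _ => e1 q]
    rw [sum_mul_sum_swap (fun w y => (starRingEnd ℂ) (τ w (x, y))) (fun w y => τ w (x', y))
      (fun w y => τ w (x, y)) (fun w y => (starRingEnd ℂ) (τ w (x', y)))]
    rw [PiLp.inner_apply]
    refine Finset.sum_congr rfl fun p _ => ?_
    simp only [RCLike.inner_apply, hgdef]
    conv_lhs => rw [mul_comm]
    rw [map_sum]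
    congr 1
    exact Finset.sum_congr rfl fun y _ => by simp [_root_.map_mul, mul_comm]
  -- Key 2 : positivity of the cross terms appearing in Tr(T²)
  have key2 : ∀ x x' : α,
      0 ≤ (∑ q : γ × γ, σ (x, q.1) (x, q.2) * σ (x', q.2) (x', q.1)).re := by
    intro x x'
    have e1 : ∀ q : γ × γ, σ (x, q.1) (x, q.2) * σ (x', q.2) (x', q.1)
        = (∑ w, (starRingEnd ℂ) (τ w (x, q.1)) * τ w (x, q.2))
          * (∑ w', τ w' (x', q.1) * (starRingEnd ℂ) (τ w' (x', q.2))) := by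
      intro q
      rw [hexp (x, q.1) (x, q.2), hexp (x', q.2) (x', q.1)]
      congr 1
      exact Finset.sum_congr rfl fun w _ => by ring
    rw [Finset.sum_congr rfl fun q _ => e1 q]
    rw [sum_mul_sum_swap (fun w y => (starRingEnd ℂ) (τ w (x, y))) (fun w y => τ w (x, y))
      (fun w y => τ w (x', y)) (fun w y => (starRingEnd ℂ) (τ w (x', y)))]
    rw [Complex.re_sum]
    refine Finset.sum_nonneg fun p _ => ?_
    have : (∑ y : γ, (starRingEnd ℂ) (τ p.1 (x, y)) * τ p.2 (x', y))
        = (starRingEnd ℂ) (∑ y' : γ, τ p.1 (x, y') * (starRingEnd ℂ) (τ p.2 (x', y'))) := by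
      rw [map_sum]
      exact Finset.sum_congr rfl fun y _ => by simp [_root_.map_mul]
    rw [this, ← Complex.normSq_eq_conj_mul_self]
    simpa using Complex.normSq_nonneg _
  -- trace identities
  have traceEq1 : ρ.trace
      = ∑ x : α, ∑ x' : α, ∑ q : γ × γ,
          σ (x, q.1) (x', q.2) * (starRingEnd ℂ) (σ (x, q.1) (x', q.2)) := by
    rw [← hσσ]
    have : (σ * σ).trace = ∑ u : α × γ, ∑ v : α × γ, σ u v * σ v u := by
      simp [Matrix.trace, Matrix.diag, Matrix.mul_apply]
    rw [this, reindex4 (fun u v => σ u v * σ v u)]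
    exact Finset.sum_congr rfl fun x _ => Finset.sum_congr rfl fun x' _ =>
      Finset.sum_congr rfl fun q _ => by rw [hσherm]
  have traceEq2 : ((partialTraceB σ * partialTraceB σ).trace)
      = ∑ x : α, ∑ x' : α, ∑ q : γ × γ, σ (x, q.1) (x, q.2) * σ (x', q.2) (x', q.1) := by
    have h0 : (partialTraceB σ * partialTraceB σ).trace
        = ∑ q : γ × γ, (∑ x : α, σ (x, q.1) (x, q.2)) * (∑ x' : α, σ (x', q.2) (x', q.1)) := by
      have : (partialTraceB σ * partialTraceB σ).trace
          = ∑ y : γ, ∑ y' : γ, (partialTraceB σ) y y' * (partialTraceB σ) y' y := by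
        simp [Matrix.trace, Matrix.diag, Matrix.mul_apply]
      rw [this]
      rw [show (∑ y : γ, ∑ y' : γ, (partialTraceB σ) y y' * (partialTraceB σ) y' y)
          = ∑ q : γ × γ, (partialTraceB σ) q.1 q.2 * (partialTraceB σ) q.2 q.1 from
        (Fintype.sum_prod_type (f := fun q : γ × γ =>
          (partialTraceB σ) q.1 q.2 * (partialTraceB σ) q.2 q.1)).symm]
      rfl
    rw [h0]
    have h1 : ∀ q : γ × γ, (∑ x : α, σ (x, q.1) (x, q.2)) * (∑ x' : α, σ (x', q.2) (x', q.1))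
        = ∑ x : α, ∑ x' : α, σ (x, q.1) (x, q.2) * σ (x', q.2) (x', q.1) :=
      fun q => Fintype.sum_mul_sum _ _
    simp only [h1]
    rw [Finset.sum_comm]
    exact Finset.sum_congr rfl fun x _ => Finset.sum_comm
  -- assembling
  have hRe1 : (1 : ℝ) = ∑ x : α, ∑ x' : α, ((inner ℂ (g x) (g x') : ℂ)).re := by
    have : (ρ.trace).re = 1 := by rw [htr]; rfl
    rw [← this, traceEq1]
    rw [Complex.re_sum]
    refine Finset.sum_congr rfl fun x _ => ?_
    rw [Complex.re_sum]
    exact Finset.sum_congr rfl fun x' _ => by rw [key1]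
  have hnormsq : ∀ x : α, ((inner ℂ (g x) (g x) : ℂ)).re = ‖g x‖ ^ 2 := fun x => by
    have := @inner_self_eq_norm_sq ℂ _ _ _ _ (g x)
    simpa using this
  have step1 : (1 : ℝ) ≤ (Fintype.card α : ℝ) * ∑ x : α, ‖g x‖ ^ 2 := by
    calc (1 : ℝ) = ∑ x : α, ∑ x' : α, ((inner ℂ (g x) (g x') : ℂ)).re := hRe1
    _ ≤ ∑ x : α, ∑ x' : α, ‖g x‖ * ‖g x'‖ := by
        refine Finset.sum_le_sum fun x _ => Finset.sum_le_sum fun x' _ => ?_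
        have := @re_inner_le_norm ℂ _ _ _ _ (g x) (g x')
        simpa using this
    _ = (∑ x : α, ‖g x‖) * (∑ x' : α, ‖g x'‖) := (Fintype.sum_mul_sum _ _).symm
    _ = (∑ x : α, ‖g x‖) ^ 2 := (sq _).symm
    _ ≤ (Fintype.card α : ℝ) * ∑ x : α, ‖g x‖ ^ 2 := by
        simpa using sq_sum_le_card_mul_sum_sq (s := (Finset.univ : Finset α))
          (f := fun x => ‖g x‖)
  have step2 : ∑ x : α, ‖g x‖ ^ 2
      ≤ ((partialTraceB σ * partialTraceB σ).trace).re := by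
    rw [traceEq2, Complex.re_sum]
    have hdiag : ∀ x : α, ‖g x‖ ^ 2
        = (∑ q : γ × γ, σ (x, q.1) (x, q.2) * σ (x, q.2) (x, q.1)).re := by
      intro x
      have e : ∑ q : γ × γ, σ (x, q.1) (x, q.2) * σ (x, q.2) (x, q.1)
          = ∑ q : γ × γ, σ (x, q.1) (x, q.2) * (starRingEnd ℂ) (σ (x, q.1) (x, q.2)) :=
        Finset.sum_congr rfl fun q _ => by rw [hσherm]
      rw [e, key1 x x, hnormsq x]
    refine Finset.sum_le_sum fun x _ => ?_
    rw [Complex.re_sum, hdiag x]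
    exact Finset.single_le_sum
      (f := fun x' => (∑ q : γ × γ, σ (x, q.1) (x, q.2) * σ (x', q.2) (x', q.1)).re)
      (fun x' _ => key2 x x') (Finset.mem_univ x)
  have hfin : (1 : ℝ) ≤ (2 : ℝ) ^ k * ((partialTraceB σ * partialTraceB σ).trace).re := by
    calc (1 : ℝ) ≤ (Fintype.card α : ℝ) * ∑ x : α, ‖g x‖ ^ 2 := step1
    _ ≤ (Fintype.card α : ℝ) * ((partialTraceB σ * partialTraceB σ).trace).re :=
        mul_le_mul_of_nonneg_left step2 (Nat.cast_nonneg _)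
    _ = (2 : ℝ) ^ k * ((partialTraceB σ * partialTraceB σ).trace).re := by
        rw [hcard]; push_cast; ring
  have h2k : (0 : ℝ) < 2 ^ k := by positivity
  have hinv : ((2 : ℝ) ^ k)⁻¹ ≤ ((partialTraceB σ * partialTraceB σ).trace).re := by
    have h := mul_le_mul_of_nonneg_left hfin (le_of_lt (inv_pos.mpr h2k))
    simpa [← mul_assoc, inv_mul_cancel₀ (ne_of_gt h2k)] using h
  calc ((2 : ℝ) ^ (3 * k))⁻¹ ≤ ((2 : ℝ) ^ k)⁻¹ := by
        apply inv_anti₀ h2k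
        apply pow_le_pow_right₀ one_le_two
        omega
  _ ≤ _ := hinv
end
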